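/- Let g be a Lie algebra over a field K of characteristic 0. On the vector space g ⊗ g, the bracket defined by [x⊗y, a⊗b] := [[x,y],a] ⊗ b + a ⊗ [[x,y],b] satisfies the left Leibniz identity, so g ⊗ g becomes a Leibniz algebra. -/

import Mathlib

open TensorProduct

/-- For a Lie algebra `g` over a field of characteristic 0, the
bracket `[x⊗y, a⊗b] = ⁅⁅x,y⁆,a⁆ ⊗ b + a ⊗ ⁅⁅x,y⁆,b⁆` makes `g ⊗ g` a Leibniz
algebra. -/
theorem stmt6 {K : Type*} [Field K] [CharZero K]
    {g : Type*} [LieRing g] [LieAlgebra K g]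
    (B : (g ⊗[K] g) →ₗ[K] (g ⊗[K] g) →ₗ[K] (g ⊗[K] g))
    (hB : ∀ x y a b : g,
      B (x ⊗ₜ[K] y) (a ⊗ₜ[K] b) = ⁅⁅x, y⁆, a⁆ ⊗ₜ[K] b + a ⊗ₜ[K] ⁅⁅x, y⁆, b⁆) :
    ∀ u v w : g ⊗[K] g, B (B u v) w = B u (B v w) - B v (B u w) := by
  -- the "multiplication" map g ⊗ g → g, x ⊗ y ↦ ⁅x, y⁆
  set μ : g ⊗[K] g →ₗ[K] g :=
    TensorProduct.lift ((LieModule.toEnd K g g) : g →ₗ[K] Module.End K g)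
    with hμdef
  have hμ : ∀ x y : g, μ (x ⊗ₜ[K] y) = ⁅x, y⁆ := fun x y => rfl
  -- B u v = ⁅μ u, v⁆ where g ⊗ g is the usual Lie module
  have key : ∀ u v : g ⊗[K] g, B u v = ⁅μ u, v⁆ := by
    intro u v
    induction u using TensorProduct.induction_on with
    | zero => simp
    | tmul x y =>
      induction v using TensorProduct.induction_on with
      | zero => simp
      | tmul a b => rw [hB, hμ, TensorProduct.LieModule.lie_tmul_right]
      | add v₁ v₂ h1 h2 => simp only [map_add, lie_add, h1, h2]
    | add u₁ u₂ h1 h2 =>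
      simp only [map_add, LinearMap.add_apply, h1, h2, add_lie]
  -- μ is equivariant: μ ⁅z, v⁆ = ⁅z, μ v⁆
  have hequiv : ∀ (z : g) (v : g ⊗[K] g), μ ⁅z, v⁆ = ⁅z, μ v⁆ := by
    intro z v
    induction v using TensorProduct.induction_on with
    | zero => simp
    | tmul a b =>
      rw [TensorProduct.LieModule.lie_tmul_right, map_add, hμ, hμ, hμ]
      exact (leibniz_lie z a b).symm
    | add v₁ v₂ h1 h2 => simp only [lie_add, map_add, h1, h2]
  intro u v w
  simp only [key, hequiv]
  exact eq_sub_iff_add_eq.mpr (leibniz_lie (μ u) (μ v) w).symm
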